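/- If voters' preferences are single-peaked with respect to a linear order on the candidates and the number of voters is odd, then the pairwise majority relation on candidates is a strict linear order (i.e., it is a total, asymmetric, transitive relation), called the Condorcet ranking. -/

import Mathlib

open Finset

/-- Each voter's preference is a strict total (linear) order on the candidates. -/
def StrictPrefs {m N : ℕ} (P : Fin N → Fin m → Fin m → Prop) : Prop :=
  ∀ v : Fin N, IsStrictTotalOrder (Fin m) (P v)

/-- Single-peakedness w.r.t. the left-right order on `Fin m`: for `i < j < k`,
no voter ranks both `C_i` and `C_k` above `C_j`. -/
def SinglePeaked {m N : ℕ} (P : Fin N → Fin m → Fin m → Prop) : Prop :=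
  ∀ (v : Fin N) (i j k : Fin m), i < j → j < k → ¬ (P v i j ∧ P v k j)

/-- Number of voters preferring `a` to `b`. -/
def prefCount {m N : ℕ} (P : Fin N → Fin m → Fin m → Prop)
    [∀ v a b, Decidable (P v a b)] (a b : Fin m) : ℕ :=
  (univ.filter fun v => P v a b).card

/-- `a` majority-defeats `b`: strictly more than `N/2` voters prefer `a` to `b`. -/
def Defeats {m N : ℕ} (P : Fin N → Fin m → Fin m → Prop)
    [∀ v a b, Decidable (P v a b)] (a b : Fin m) : Prop :=
  2 * prefCount P a b > N

instance {m N : ℕ} (P : Fin N → Fin m → Fin m → Prop)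
    [∀ v a b, Decidable (P v a b)] (a b : Fin m) : Decidable (Defeats P a b) :=
  inferInstanceAs (Decidable (2 * prefCount P a b > N))

/-- Voter `v` approves candidate `a` under Bloc voting with `k` winners:
`a` is among `v`'s top `k` candidates. -/
def Approves {m N : ℕ} (P : Fin N → Fin m → Fin m → Prop)
    [∀ v a b, Decidable (P v a b)] (k : ℕ) (v : Fin N) (a : Fin m) : Prop :=
  (univ.filter fun b => P v b a).card < k

instance {m N : ℕ} (P : Fin N → Fin m → Fin m → Prop)
    [∀ v a b, Decidable (P v a b)] (k : ℕ) (v : Fin N) (a : Fin m) :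
    Decidable (Approves P k v a) :=
  inferInstanceAs (Decidable ((univ.filter fun b => P v b a).card < k))

/-- Bloc score of candidate `a`: the number of voters who approve `a`. -/
def blocScore {m N : ℕ} (P : Fin N → Fin m → Fin m → Prop)
    [∀ v a b, Decidable (P v a b)] (k : ℕ) (a : Fin m) : ℕ :=
  (univ.filter fun v => Approves P k v a).card

/-- `W` is a winning set under Bloc voting with `k` winners (strict vote totals):
`W` has `k` members and each member has strictly more approvals than each non-member. -/
def IsWinningSet {m N : ℕ} (P : Fin N → Fin m → Fin m → Prop)
    [∀ v a b, Decidable (P v a b)] (k : ℕ) (W : Finset (Fin m)) : Prop :=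
  W.card = k ∧ ∀ w ∈ W, ∀ c ∉ W, blocScore P k w > blocScore P k c

section Aux

variable {m N : ℕ} (P : Fin N → Fin m → Fin m → Prop) [∀ v a b, Decidable (P v a b)]

lemma prefCount_add (hP : StrictPrefs P) {a b : Fin m} (hab : a ≠ b) :
    prefCount P a b + prefCount P b a = N := by
  have key : ∀ v : Fin N, P v b a ↔ ¬ P v a b := by
    intro v
    have ht := hP v
    constructor
    · intro h1 h2
      exact ht.irrefl a (ht.trans _ _ _ h2 h1)
    · intro h1
      rcases trichotomous (r := P v) b a with h | h | h
      · exact h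
      · exact absurd h.symm hab
      · exact absurd h h1
  have : (univ.filter fun v => P v b a) = (univ.filter fun v => ¬ P v a b) :=
    Finset.filter_congr fun v _ => by simp [key v]
  rw [prefCount, prefCount, this,
    Finset.card_filter_add_card_filter_not (p := fun v => P v a b)]
  simp

lemma defeats_asymm (hP : StrictPrefs P) {a b : Fin m}
    (h1 : Defeats P a b) (h2 : Defeats P b a) : False := by
  rcases eq_or_ne a b with rfl | hab
  · have : (univ.filter fun v => P v a a) = ∅ := by
      apply Finset.filter_false_of_mem
      intro v _
      exact (hP v).irrefl a
    have hz : prefCount P a a = 0 := by rw [prefCount, this]; simp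
    rw [Defeats, hz] at h1
    omega
  · have := prefCount_add P hP hab
    rw [Defeats] at h1 h2
    omega

lemma defeats_total (hP : StrictPrefs P) (hN : Odd N) {a b : Fin m} (hab : a ≠ b) :
    Defeats P a b ∨ Defeats P b a := by
  have hsum := prefCount_add P hP hab
  rw [Defeats, Defeats]
  rcases hN with ⟨t, ht⟩
  omega

lemma pv_left (hP : StrictPrefs P) (hSP : SinglePeaked P) {i j k : Fin m}
    (hij : i < j) (hjk : j < k) (v : Fin N) (h : P v k i) : P v j i := by
  have ht := hP v
  by_contra hc
  have hij' : P v i j := by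
    rcases trichotomous (r := P v) i j with h' | h' | h'
    · exact h'
    · exact absurd h' (ne_of_lt hij)
    · exact absurd h' hc
  rcases trichotomous (r := P v) j k with h' | h' | h'
  · exact hc (ht.trans _ _ _ h' h)
  · exact (ne_of_lt hjk) h'
  · exact hSP v i j k hij hjk ⟨hij', h'⟩

lemma pv_right (hP : StrictPrefs P) (hSP : SinglePeaked P) {i j k : Fin m}
    (hij : i < j) (hjk : j < k) (v : Fin N) (h : P v i k) : P v j k := by
  have ht := hP v
  by_contra hc
  have hkj : P v k j := by
    rcases trichotomous (r := P v) k j with h' | h' | h'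
    · exact h'
    · exact absurd h'.symm (ne_of_lt hjk)
    · exact absurd h' hc
  have hij' : P v i j := by
    rcases trichotomous (r := P v) i j with h' | h' | h'
    · exact h'
    · exact absurd h' (ne_of_lt hij)
    · exact hc (ht.trans _ _ _ h' h) |>.elim
  exact hSP v i j k hij hjk ⟨hij', hkj⟩

lemma prefCount_mono {a b c d : Fin m} (h : ∀ v, P v a b → P v c d) :
    prefCount P a b ≤ prefCount P c d := by
  apply Finset.card_le_card
  intro v hv
  simp only [Finset.mem_filter] at hv ⊢
  exact ⟨hv.1, h v hv.2⟩

lemma defeats_left (hP : StrictPrefs P) (hSP : SinglePeaked P) {i j k : Fin m}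
    (hij : i < j) (hjk : j < k) (h : Defeats P k i) : Defeats P j i := by
  have := prefCount_mono P (a := k) (b := i) (c := j) (d := i)
    (fun v => pv_left P hP hSP hij hjk v)
  rw [Defeats] at h ⊢
  omega

lemma defeats_right (hP : StrictPrefs P) (hSP : SinglePeaked P) {i j k : Fin m}
    (hij : i < j) (hjk : j < k) (h : Defeats P i k) : Defeats P j k := by
  have := prefCount_mono P (a := i) (b := k) (c := j) (d := k)
    (fun v => pv_right P hP hSP hij hjk v)
  rw [Defeats] at h ⊢
  omega

end Aux

/-- Under single-peaked preferences with an odd number of voters, the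
pairwise majority relation is total, asymmetric, and transitive. -/
theorem majority_relation_strict_linear_order {m N : ℕ}
    (P : Fin N → Fin m → Fin m → Prop) [∀ v a b, Decidable (P v a b)]
    (hP : StrictPrefs P) (hSP : SinglePeaked P) (hN : Odd N) :
    (∀ a b : Fin m, a ≠ b → Defeats P a b ∨ Defeats P b a) ∧
    (∀ a b : Fin m, Defeats P a b → ¬ Defeats P b a) ∧
    (∀ a b c : Fin m, Defeats P a b → Defeats P b c → Defeats P a c) := by
  refine ⟨fun a b hab => defeats_total P hP hN hab,
    fun a b h1 h2 => (defeats_asymm P hP h1 h2).elim, ?_⟩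
  intro a b c hab hbc
  by_contra hac
  have hneab : a ≠ b := by
    rintro rfl
    exact defeats_asymm P hP hab hab
  have hnebc : b ≠ c := by
    rintro rfl
    exact defeats_asymm P hP hbc hbc
  have hneac : a ≠ c := by
    rintro rfl
    exact defeats_asymm P hP hab hbc
  have hca : Defeats P c a := (defeats_total P hP hN hneac).resolve_left hac
  rcases lt_trichotomy a b with h1 | h1 | h1
  · rcases lt_trichotomy b c with h2 | h2 | h2
    · -- a < b < c
      exact defeats_asymm P hP hab (defeats_left P hP hSP h1 h2 hca)
    · exact hnebc h2
    · rcases lt_trichotomy a c with h3 | h3 | h3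
      · -- a < c < b
        exact defeats_asymm P hP hbc (defeats_right P hP hSP h3 h2 hab)
      · exact hneac h3
      · -- c < a < b
        exact defeats_asymm P hP hca (defeats_left P hP hSP h3 h1 hbc)
  · exact hneab h1
  · rcases lt_trichotomy b c with h2 | h2 | h2
    · rcases lt_trichotomy a c with h3 | h3 | h3
      · -- b < a < c
        exact defeats_asymm P hP hca (defeats_right P hP hSP h1 h3 hbc)
      · exact hneac h3
      · -- b < c < a
        exact defeats_asymm P hP hbc (defeats_left P hP hSP h2 h3 hab)
    · exact hnebc h2
    · -- c < b < a
      exact defeats_asymm P hP hab (defeats_right P hP hSP h2 h1 hca)
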